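/- Let X and Y be Λ-lattices, let S = End_𝓜(𝓜Y), identify T = End_Λ(Y) with the subring {s ∈ S : s(Y) ⊆ Y} of S, and let 𝕴 be a two-sided ideal of S contained in T that is full (i.e. 𝕴 spans End_A(K·𝓜Y) over K). Let f : 𝓜X → 𝓜Y be an isomorphism of 𝓜-lattices and let g, g′ ∈ Aut_𝓜(𝓜Y) with g′ − g ∈ 𝕴. If (g ∘ f)(X) ⊆ Y then (g′ ∘ f)(X) ⊆ Y. -/
import Mathlib


open Submodule Function

/-- A submodule is stable under (left multiplication by) a set `S` of operators. -/
def SetStable {A V R₀ : Type*} [Semiring R₀] [AddCommMonoid V] [Module R₀ V] [SMul A V]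
    (S : Set A) (X : Submodule R₀ V) : Prop :=
  ∀ a ∈ S, ∀ x ∈ X, a • x ∈ X

/-- A linear map `f : X → Y` intertwines the action of every element of `S`. -/
def IsEquivMap {A V W R₀ : Type*} [Semiring R₀] [AddCommMonoid V] [AddCommMonoid W]
    [Module R₀ V] [Module R₀ W] [SMul A V] [SMul A W]
    (S : Set A) (X : Submodule R₀ V) (Y : Submodule R₀ W) (f : X →ₗ[R₀] Y) : Prop :=
  ∀ a ∈ S, ∀ (v : V) (hv : v ∈ X) (hav : a • v ∈ X),
    ((f ⟨a • v, hav⟩ : Y) : W) = a • ((f ⟨v, hv⟩ : Y) : W)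

/-- There exists an isomorphism of lattices, i.e. a bijective `R₀`-linear map
intertwining the action of every element of `S`. -/
def ExistsLatIso {A V W R₀ : Type*} [Semiring R₀] [AddCommMonoid V] [AddCommMonoid W]
    [Module R₀ V] [Module R₀ W] [SMul A V] [SMul A W]
    (S : Set A) (X : Submodule R₀ V) (Y : Submodule R₀ W) : Prop :=
  ∃ f : X →ₗ[R₀] Y, Function.Bijective f ∧ IsEquivMap S X Y f

/-- `Λ` is an `𝒪`-order in the `K`-algebra `A`: it is a subring that is finitely
generated as an `𝒪`-module and spans `A` over `K`. -/
def IsOrder (𝒪 K A : Type*) [CommRing 𝒪] [Field K] [Ring A] [Algebra 𝒪 K] [Algebra K A]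
    [Algebra 𝒪 A] (Λ : Subalgebra 𝒪 A) : Prop :=
  (Subalgebra.toSubmodule Λ).FG ∧ Submodule.span K (Λ : Set A) = ⊤

/-- The localization `𝒪_𝔭` of `𝒪` at a prime `𝔭`, realized as a subalgebra of the
fraction field `K`. -/
noncomputable def localizationAt (𝒪 K : Type*) [CommRing 𝒪] [IsDomain 𝒪] [Field K]
    [Algebra 𝒪 K] [IsFractionRing 𝒪 K] (𝔭 : Ideal 𝒪) (h𝔭 : 𝔭.IsPrime) : Subalgebra 𝒪 K :=
  letI := h𝔭
  Localization.subalgebra K 𝔭.primeCompl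
    (fun s hs => mem_nonZeroDivisors_of_ne_zero (fun h => hs (by simp [h])))

/-- The localization `X_𝔭 = 𝒪_𝔭 X` of a lattice `X`, as an `𝒪_𝔭`-submodule. -/
noncomputable def locLattice (𝒪 K : Type*) [CommRing 𝒪] [IsDomain 𝒪] [Field K]
    [Algebra 𝒪 K] [IsFractionRing 𝒪 K] {V : Type*} [AddCommGroup V] [Module K V] [Module 𝒪 V]
    (𝔭 : Ideal 𝒪) (h𝔭 : 𝔭.IsPrime) (X : Submodule 𝒪 V) :
    Submodule (localizationAt 𝒪 K 𝔭 h𝔭) V :=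
  Submodule.span (localizationAt 𝒪 K 𝔭 h𝔭) (X : Set V)

/-- Two `Λ`-lattices are locally isomorphic (lie in the same genus) if their
localizations at every maximal ideal `𝔭` of `𝒪` are isomorphic `Λ_𝔭`-lattices. -/
noncomputable def LocallyIsomorphic (𝒪 K A : Type*) [CommRing 𝒪] [IsDomain 𝒪] [Field K]
    [Algebra 𝒪 K] [IsFractionRing 𝒪 K] [Ring A] [Algebra 𝒪 A]
    {V W : Type*} [AddCommGroup V] [Module K V] [Module 𝒪 V] [Module A V]
    [AddCommGroup W] [Module K W] [Module 𝒪 W] [Module A W]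
    (Λ : Subalgebra 𝒪 A) (X : Submodule 𝒪 V) (Y : Submodule 𝒪 W) : Prop :=
  ∀ (𝔭 : Ideal 𝒪) (h𝔭 : 𝔭.IsMaximal),
    ExistsLatIso (Λ : Set A) (locLattice 𝒪 K 𝔭 h𝔭.isPrime X) (locLattice 𝒪 K 𝔭 h𝔭.isPrime Y)

/-- `𝓜` is a maximal `𝒪`-order in `A`. -/
def IsMaximalOrder (𝒪 K A : Type*) [CommRing 𝒪] [Field K] [Ring A] [Algebra 𝒪 K]
    [Algebra K A] [Algebra 𝒪 A] (𝓜 : Subalgebra 𝒪 A) : Prop :=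
  IsOrder 𝒪 K A 𝓜 ∧ ∀ Λ'' : Subalgebra 𝒪 A, IsOrder 𝒪 K A Λ'' → 𝓜 ≤ Λ'' → 𝓜 = Λ''

lemma smul_comm_aux' {𝒪 K A W : Type*} [CommRing 𝒪] [Field K] [Algebra 𝒪 K] [Ring A]
    [Algebra K A] [AddCommGroup W] [Module K W] [Module 𝒪 W] [IsScalarTower 𝒪 K W]
    [Module A W] [IsScalarTower K A W] (r : 𝒪) (a : A) (w : W) :
    a • (r • w) = r • (a • w) := by
  rw [← algebraMap_smul K r w, ← algebraMap_smul K r (a • w),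
      ← algebraMap_smul A (algebraMap 𝒪 K r) w, ← algebraMap_smul A (algebraMap 𝒪 K r) (a • w),
      ← mul_smul, ← mul_smul, Algebra.commutes]

/-- Let `S = End_𝓜(𝓜Y)`, identify `T = End_Λ(Y)` with
`{s ∈ S : s(Y) ⊆ Y}`, and let `𝕴 ⊆ T` be a full two-sided ideal of `S`.  If
`f : 𝓜X → 𝓜Y` is an isomorphism of `𝓜`-lattices and `g, g′ ∈ Aut_𝓜(𝓜Y)` with
`g′ − g ∈ 𝕴`, then `(g ∘ f)(X) ⊆ Y` implies `(g′ ∘ f)(X) ⊆ Y`. -/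
theorem stmt_6
    (𝒪 : Type*) [CommRing 𝒪] [IsDomain 𝒪] [IsDedekindDomain 𝒪]
    (K : Type*) [Field K] [Algebra 𝒪 K] [IsFractionRing 𝒪 K]
    (hOK : ¬ Function.Surjective (algebraMap 𝒪 K))
    (A : Type*) [Ring A] [Algebra K A] [Algebra 𝒪 A] [IsScalarTower 𝒪 K A]
    [FiniteDimensional K A] [IsSemisimpleRing A] [Algebra.IsSeparable K A]
    (Λ 𝓜 : Subalgebra 𝒪 A) (hΛ : IsOrder 𝒪 K A Λ)
    (h𝓜 : IsMaximalOrder 𝒪 K A 𝓜) (hΛ𝓜 : Λ ≤ 𝓜)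
    (V : Type*) [AddCommGroup V] [Module K V] [Module 𝒪 V] [IsScalarTower 𝒪 K V]
    [Module A V] [IsScalarTower K A V]
    (W : Type*) [AddCommGroup W] [Module K W] [Module 𝒪 W] [IsScalarTower 𝒪 K W]
    [Module A W] [IsScalarTower K A W]
    (X : Submodule 𝒪 V) (hXfg : X.FG) (hXst : SetStable (Λ : Set A) X)
    (Y : Submodule 𝒪 W) (hYfg : Y.FG) (hYst : SetStable (Λ : Set A) Y)
    -- `𝕴`, a set of `𝓜`-equivariant endomorphisms of `𝓜Y`
    (I : Set ((Submodule.span 𝒪 {w : W | ∃ a ∈ 𝓜, ∃ y ∈ Y, w = a • y}) →ₗ[𝒪]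
      (Submodule.span 𝒪 {w : W | ∃ a ∈ 𝓜, ∃ y ∈ Y, w = a • y})))
    -- `𝕴 ⊆ S = End_𝓜(𝓜Y)`
    (hIS : ∀ φ ∈ I, IsEquivMap (𝓜 : Set A)
      (Submodule.span 𝒪 {w : W | ∃ a ∈ 𝓜, ∃ y ∈ Y, w = a • y})
      (Submodule.span 𝒪 {w : W | ∃ a ∈ 𝓜, ∃ y ∈ Y, w = a • y}) φ)
    -- `𝕴` is an additive subgroup
    (hI0 : (0 : (Submodule.span 𝒪 {w : W | ∃ a ∈ 𝓜, ∃ y ∈ Y, w = a • y}) →ₗ[𝒪]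
      (Submodule.span 𝒪 {w : W | ∃ a ∈ 𝓜, ∃ y ∈ Y, w = a • y})) ∈ I)
    (hIsub : ∀ φ ∈ I, ∀ ψ ∈ I, φ - ψ ∈ I)
    -- `𝕴` is a two-sided ideal of `S`
    (hIdeal : ∀ φ ∈ I, ∀ s : (Submodule.span 𝒪 {w : W | ∃ a ∈ 𝓜, ∃ y ∈ Y, w = a • y}) →ₗ[𝒪]
        (Submodule.span 𝒪 {w : W | ∃ a ∈ 𝓜, ∃ y ∈ Y, w = a • y}),
      IsEquivMap (𝓜 : Set A)
        (Submodule.span 𝒪 {w : W | ∃ a ∈ 𝓜, ∃ y ∈ Y, w = a • y})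
        (Submodule.span 𝒪 {w : W | ∃ a ∈ 𝓜, ∃ y ∈ Y, w = a • y}) s →
      (s ∘ₗ φ ∈ I ∧ φ ∘ₗ s ∈ I))
    -- `𝕴 ⊆ T = {s ∈ S : s(Y) ⊆ Y}`
    (hIT : ∀ φ ∈ I, ∀ (w : W) (hw : w ∈ Submodule.span 𝒪 {w : W | ∃ a ∈ 𝓜, ∃ y ∈ Y, w = a • y}),
      w ∈ Y → ((φ ⟨w, hw⟩ : Submodule.span 𝒪 {w : W | ∃ a ∈ 𝓜, ∃ y ∈ Y, w = a • y}) : W) ∈ Y)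
    -- `𝕴` is full: every element of `S` has a nonzero `𝒪`-multiple in `𝕴`
    (hIfull : ∀ s : (Submodule.span 𝒪 {w : W | ∃ a ∈ 𝓜, ∃ y ∈ Y, w = a • y}) →ₗ[𝒪]
        (Submodule.span 𝒪 {w : W | ∃ a ∈ 𝓜, ∃ y ∈ Y, w = a • y}),
      IsEquivMap (𝓜 : Set A)
        (Submodule.span 𝒪 {w : W | ∃ a ∈ 𝓜, ∃ y ∈ Y, w = a • y})
        (Submodule.span 𝒪 {w : W | ∃ a ∈ 𝓜, ∃ y ∈ Y, w = a • y}) s →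
      ∃ r : 𝒪, r ≠ 0 ∧ r • s ∈ I)
    -- `f : 𝓜X → 𝓜Y` is an isomorphism of `𝓜`-lattices
    (f : (Submodule.span 𝒪 {v : V | ∃ a ∈ 𝓜, ∃ x ∈ X, v = a • x}) →ₗ[𝒪]
      (Submodule.span 𝒪 {w : W | ∃ a ∈ 𝓜, ∃ y ∈ Y, w = a • y}))
    (hfb : Function.Bijective f)
    (hfe : IsEquivMap (𝓜 : Set A)
      (Submodule.span 𝒪 {v : V | ∃ a ∈ 𝓜, ∃ x ∈ X, v = a • x})
      (Submodule.span 𝒪 {w : W | ∃ a ∈ 𝓜, ∃ y ∈ Y, w = a • y}) f)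
    -- `g, g′ ∈ Aut_𝓜(𝓜Y)`
    (g g' : (Submodule.span 𝒪 {w : W | ∃ a ∈ 𝓜, ∃ y ∈ Y, w = a • y}) →ₗ[𝒪]
      (Submodule.span 𝒪 {w : W | ∃ a ∈ 𝓜, ∃ y ∈ Y, w = a • y}))
    (hgb : Function.Bijective g)
    (hge : IsEquivMap (𝓜 : Set A)
      (Submodule.span 𝒪 {w : W | ∃ a ∈ 𝓜, ∃ y ∈ Y, w = a • y})
      (Submodule.span 𝒪 {w : W | ∃ a ∈ 𝓜, ∃ y ∈ Y, w = a • y}) g)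
    (hg'b : Function.Bijective g')
    (hg'e : IsEquivMap (𝓜 : Set A)
      (Submodule.span 𝒪 {w : W | ∃ a ∈ 𝓜, ∃ y ∈ Y, w = a • y})
      (Submodule.span 𝒪 {w : W | ∃ a ∈ 𝓜, ∃ y ∈ Y, w = a • y}) g')
    -- `g′ − g ∈ 𝕴`
    (hgg' : g' - g ∈ I)
    -- `(g ∘ f)(X) ⊆ Y`
    (hgf : ∀ (x : V) (hx' : x ∈ Submodule.span 𝒪 {v : V | ∃ a ∈ 𝓜, ∃ x ∈ X, v = a • x}),
      x ∈ X → ((g (f ⟨x, hx'⟩) :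
        Submodule.span 𝒪 {w : W | ∃ a ∈ 𝓜, ∃ y ∈ Y, w = a • y}) : W) ∈ Y) :
    -- then `(g′ ∘ f)(X) ⊆ Y`
    ∀ (x : V) (hx' : x ∈ Submodule.span 𝒪 {v : V | ∃ a ∈ 𝓜, ∃ x ∈ X, v = a • x}),
      x ∈ X → ((g' (f ⟨x, hx'⟩) :
        Submodule.span 𝒪 {w : W | ∃ a ∈ 𝓜, ∃ y ∈ Y, w = a • y}) : W) ∈ Y := by
  have hstab : ∀ a ∈ 𝓜, ∀ w ∈ Submodule.span 𝒪 {w : W | ∃ a ∈ 𝓜, ∃ y ∈ Y, w = a • y},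
      a • w ∈ Submodule.span 𝒪 {w : W | ∃ a ∈ 𝓜, ∃ y ∈ Y, w = a • y} := by
    intro a ha w hw
    induction hw using Submodule.span_induction with
    | mem w hwmem =>
      obtain ⟨b, hb, y, hy, rfl⟩ := hwmem
      rw [← mul_smul]
      exact Submodule.subset_span ⟨a * b, mul_mem ha hb, y, hy, rfl⟩
    | zero => simp
    | add u v _ _ hu hv => rw [smul_add]; exact Submodule.add_mem _ hu hv
    | smul r u _ hu => rw [smul_comm_aux' (K := K) r a u]; exact Submodule.smul_mem _ r hu
  set e := LinearEquiv.ofBijective g hgb with hedef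
  have he : ∀ u, e u = g u := fun u => rfl
  have hinve : IsEquivMap (𝓜 : Set A)
      (Submodule.span 𝒪 {w : W | ∃ a ∈ 𝓜, ∃ y ∈ Y, w = a • y})
      (Submodule.span 𝒪 {w : W | ∃ a ∈ 𝓜, ∃ y ∈ Y, w = a • y}) e.symm.toLinearMap := by
    intro a ha v hv hav
    set u := e.symm ⟨v, hv⟩ with hudef
    have hgu : e u = ⟨v, hv⟩ := e.apply_symm_apply _
    have hau : a • (u : W) ∈ Submodule.span 𝒪 {w : W | ∃ a ∈ 𝓜, ∃ y ∈ Y, w = a • y} :=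
      hstab a ha u u.2
    have key := hge a ha (u : W) u.2 hau
    have hgu' : g ⟨(u : W), u.2⟩ = ⟨v, hv⟩ := by rw [← he]; exact hgu
    rw [hgu'] at key
    have h3 : e ⟨a • (u : W), hau⟩ = ⟨a • v, hav⟩ := by
      rw [he]; exact Subtype.ext key
    have h2 : e.symm ⟨a • v, hav⟩ = ⟨a • (u : W), hau⟩ := by
      rw [← h3, e.symm_apply_apply]
    simp only [LinearEquiv.coe_coe]
    rw [h2]
  set φ := (g' - g) ∘ₗ e.symm.toLinearMap with hφdef
  have hφI : φ ∈ I := (hIdeal (g' - g) hgg' e.symm.toLinearMap hinve).2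
  intro x hx' hx
  set u := f ⟨x, hx'⟩ with hudef
  have hwY : ((g u : Submodule.span 𝒪 {w : W | ∃ a ∈ 𝓜, ∃ y ∈ Y, w = a • y}) : W) ∈ Y :=
    hgf x hx' hx
  have h1 := hIT φ hφI ((g u : _) : W) (g u).2 hwY
  have hφval : φ ⟨((g u : _) : W), (g u).2⟩ = (g' - g) u := by
    rw [hφdef]
    simp only [LinearMap.coe_comp, Function.comp_apply, LinearEquiv.coe_coe]
    congr 1
    rw [Subtype.coe_eta, ← he, e.symm_apply_apply]
  rw [hφval] at h1
  have hsub : (((g' - g) u : _) : W) = ((g' u : _) : W) - ((g u : _) : W) := by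
    simp [LinearMap.sub_apply]
  have hfinal : ((g' u : _) : W) = (((g' - g) u : _) : W) + ((g u : _) : W) := by
    rw [hsub]; abel
  rw [hfinal]
  exact Submodule.add_mem _ h1 hwY
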